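/- Given a universe lifting facility, for every simple type expression s built from base types (variables) and the arrow constructor there exist functions Up_s : ⟦s⟧ → ⟦UpType s⟧ and Down_s : ⟦UpType s⟧ → ⟦s⟧ satisfying the bijectivity conditions Up_s ∘ Down_s = id and Down_s ∘ Up_s = id, and the congruence condition: for all f : ⟦α → β⟧ and x : ⟦α⟧, Up_β (f x) = (Up_{α→β} f) (Up_α x). Here UpType is defined recursively by UpType a = GLift a for a base type a, and UpType (α → β) = UpType α → UpType β. -/
import Mathlib

namespace LeanAuto

/-- A universe lifting facility: `GLift α` wraps a value of `α : Sort u` into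
`Sort (max u (v + 1))`.  The maps `GLift.up : α → GLift α` and
`GLift.down : GLift α → α` are mutually inverse (the bijectivity conditions
hold definitionally for this one-field structure). -/
structure GLift.{u, v} (α : Sort u) : Sort (max u (v + 1)) where
  /-- Lift a value into `GLift α` -/
  up ::
  /-- Extract a value from `GLift α` -/
  down : α

/-- Simple type expressions, built from base types (variables from `ν`) and
the arrow constructor. -/
inductive STy (ν : Type) : Type where
  | base : ν → STy ν
  | arrow : STy ν → STy ν → STy ν

/-- The interpretation `⟦s⟧` of a simple type expression: each base type
variable is interpreted by `I`, and the arrow constructor is interpreted as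
the function type. -/
def STy.interp.{u} {ν : Type} (I : ν → Sort u) : STy ν → Sort u
  | .base a => I a
  | .arrow s t => s.interp I → t.interp I

/-- The interpretation `⟦UpType s⟧`, where `UpType` is defined recursively by
`UpType a = GLift a` for a base type `a` and
`UpType (α → β) = UpType α → UpType β`. -/
def STy.upInterp.{u, v} {ν : Type} (I : ν → Sort u) : STy ν → Sort (max u (v + 1))
  | .base a => GLift.{u, v} (I a)
  | .arrow s t => s.upInterp I → t.upInterp I

def STy.updown.{u, v} {ν : Type} (I : ν → Sort u) :
    ∀ s : STy ν, PProd (s.interp I → STy.upInterp.{u, v} I s) (STy.upInterp.{u, v} I s → s.interp I)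
  | .base _ => ⟨fun x => GLift.up x, fun x => x.down⟩
  | .arrow α β =>
      ⟨fun f x => (STy.updown I β).1 (f ((STy.updown I α).2 x)),
       fun f x => (STy.updown I β).2 (f ((STy.updown I α).1 x))⟩

theorem STy.updown_roundtrip.{u, v} {ν : Type} (I : ν → Sort u) :
    ∀ s : STy ν, (∀ x, (STy.updown.{u, v} I s).1 ((STy.updown.{u, v} I s).2 x) = x) ∧
      (∀ x, (STy.updown.{u, v} I s).2 ((STy.updown.{u, v} I s).1 x) = x)
  | .base _ => ⟨fun _ => rfl, fun _ => rfl⟩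
  | .arrow α β => by
      obtain ⟨hα1, hα2⟩ := STy.updown_roundtrip I α
      obtain ⟨hβ1, hβ2⟩ := STy.updown_roundtrip I β
      constructor
      · intro f; funext x
        show (STy.updown.{u, v} I β).1 ((STy.updown.{u, v} I β).2 (f ((STy.updown.{u, v} I α).1 ((STy.updown.{u, v} I α).2 x)))) = f x
        rw [hα1, hβ1]
      · intro f; funext x
        show (STy.updown.{u, v} I β).2 ((STy.updown.{u, v} I β).1 (f ((STy.updown.{u, v} I α).2 ((STy.updown.{u, v} I α).1 x)))) = f x
        rw [hα2, hβ2]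

/-- Given a universe lifting facility, for every simple type
expression `s` built from base types and the arrow constructor there exist
functions `Up_s : ⟦s⟧ → ⟦UpType s⟧` and `Down_s : ⟦UpType s⟧ → ⟦s⟧` satisfying
the bijectivity conditions `Up_s ∘ Down_s = id` and `Down_s ∘ Up_s = id`, and
the congruence condition: for all `f : ⟦α → β⟧` and `x : ⟦α⟧`,
`Up_β (f x) = (Up_{α→β} f) (Up_α x)`. -/
theorem exists_up_down.{u, v} {ν : Type} (I : ν → Sort u) :
    ∃ (Up : ∀ s : STy ν, s.interp I → STy.upInterp.{u, v} I s)
      (Down : ∀ s : STy ν, STy.upInterp.{u, v} I s → s.interp I),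
      (∀ (s : STy ν) (x : STy.upInterp.{u, v} I s), Up s (Down s x) = x) ∧
      (∀ (s : STy ν) (x : s.interp I), Down s (Up s x) = x) ∧
      (∀ (α β : STy ν) (f : (STy.arrow α β).interp I) (x : α.interp I),
        Up β (f x) = (Up (STy.arrow α β) f) (Up α x)) := by
  refine ⟨fun s => (STy.updown.{u, v} I s).1, fun s => (STy.updown.{u, v} I s).2,
    fun s => (STy.updown_roundtrip.{u, v} I s).1, fun s => (STy.updown_roundtrip.{u, v} I s).2, ?_⟩
  intro α β f x
  show (STy.updown.{u, v} I β).1 (f x) = (STy.updown.{u, v} I β).1 (f ((STy.updown.{u, v} I α).2 ((STy.updown.{u, v} I α).1 x)))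
  rw [(STy.updown_roundtrip.{u, v} I α).2 x]

end LeanAuto
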